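/- (Constant of motion for lossless game dynamics.) Consider a graphical constant-sum game with a fully mixed Nash equilibrium x̂* = (x*_1,…,x*_m). Suppose each agent i uses a convex combination of FTRL dynamics: fix strictly convex continuous regularizers h_{i1},…,h_{iℓ_i} : Δ^{n_i} → ℝ and weights α_{i1},…,α_{iℓ_i} ≥ 0 with ∑_ℓ α_{iℓ} = 1. Let (q_i, x_i)_{i=1}^m be continuous trajectories on [0,∞) satisfying, for all t ≥ 0: q_i(t) = q_i(0) + ∫₀ᵗ p_i(τ) dτ with p_i(τ) = ∑_{k ≠ i} A^{ik} x_k(τ), and x_i(t) = ∑_{ℓ=1}^{ℓ_i} α_{iℓ} · argmax_{x ∈ Δ^{n_i}} (⟨q_i(t), x⟩ − h_{iℓ}(x)). Then the function H(t) := ∑_{i=1}^m ∑_{ℓ=1}^{ℓ_i} α_{iℓ} ( h_{iℓ}*(q_i(t)) − ⟨q_i(t), x*_i⟩ + h_{iℓ}(x*_i) ) is constant in t, i.e. H(t) = H(0) for all t ≥ 0. -/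

import Mathlib

open scoped BigOperators
open MeasureTheory

noncomputable section

/-- The standard probability simplex in ℝᵈ. -/
def simplex (d : ℕ) : Set (Fin d → ℝ) := {x | (∀ j, 0 ≤ x j) ∧ ∑ j, x j = 1}

/-- Euclidean inner product on ℝᵈ. -/
def dot {d : ℕ} (a b : Fin d → ℝ) : ℝ := ∑ j, a j * b j

/-- Agent i's payoff vector in a graphical game: pᵢ(x̂) = ∑_{k ≠ i} A^{ik} x_k. -/
def payoff {m : ℕ} {n : Fin m → ℕ}
    (A : (i k : Fin m) → Matrix (Fin (n i)) (Fin (n k)) ℝ)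
    (x : (k : Fin m) → Fin (n k) → ℝ) (i : Fin m) : Fin (n i) → ℝ :=
  ∑ k ∈ Finset.univ.erase i, (A i k).mulVec (x k)

/- STATEMENT 17 (constant of motion): in a graphical constant-sum game with a fully
mixed Nash equilibrium x̂*, with each agent using a convex combination of FTRL dynamics
(fᵢℓ(q) being the unique maximizer defining hᵢℓ*(q) = ⟨q, fᵢℓ(q)⟩ − hᵢℓ(fᵢℓ(q))),
the quantity H(t) = ∑ᵢ ∑ℓ αᵢℓ ( hᵢℓ*(qᵢ(t)) − ⟨qᵢ(t), x*ᵢ⟩ + hᵢℓ(x*ᵢ) ) is constant. -/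

lemma dot_comm {d : ℕ} (a b : Fin d → ℝ) : dot a b = dot b a := by
  unfold dot; exact Finset.sum_congr rfl fun j _ => mul_comm _ _

lemma dot_sub_left {d : ℕ} (a b v : Fin d → ℝ) : dot (a - b) v = dot a v - dot b v := by
  unfold dot; rw [← Finset.sum_sub_distrib]; exact Finset.sum_congr rfl fun j _ => by
    simp [sub_mul]

lemma dot_add_left {d : ℕ} (a b v : Fin d → ℝ) : dot (a + b) v = dot a v + dot b v := by
  unfold dot; rw [← Finset.sum_add_distrib]; exact Finset.sum_congr rfl fun j _ => by
    simp [add_mul]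

lemma dot_sub_right {d : ℕ} (v a b : Fin d → ℝ) : dot v (a - b) = dot v a - dot v b := by
  rw [dot_comm, dot_sub_left, dot_comm a v, dot_comm b v]

lemma dot_add_right {d : ℕ} (v a b : Fin d → ℝ) : dot v (a + b) = dot v a + dot v b := by
  rw [dot_comm, dot_add_left, dot_comm a v, dot_comm b v]

lemma abs_dot_le_of_simplex {d : ℕ} (v x : Fin d → ℝ) (hx : x ∈ simplex d) :
    |dot v x| ≤ ‖v‖ := by
  obtain ⟨hx0, hx1⟩ := hx
  calc |dot v x| ≤ ∑ j, |v j * x j| := Finset.abs_sum_le_sum_abs _ _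
    _ ≤ ∑ j, ‖v‖ * x j := by
        refine Finset.sum_le_sum fun j _ => ?_
        rw [abs_mul, abs_of_nonneg (hx0 j)]
        exact mul_le_mul_of_nonneg_right (by
          simpa [Real.norm_eq_abs] using norm_le_pi_norm v j) (hx0 j)
    _ = ‖v‖ := by rw [← Finset.mul_sum, hx1, mul_one]

lemma abs_dot_le {d : ℕ} (a b : Fin d → ℝ) : |dot a b| ≤ d * (‖a‖ * ‖b‖) := by
  calc |dot a b| ≤ ∑ j, |a j * b j| := Finset.abs_sum_le_sum_abs _ _
    _ ≤ ∑ _j : Fin d, ‖a‖ * ‖b‖ := by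
        refine Finset.sum_le_sum fun j _ => ?_
        rw [abs_mul]
        exact mul_le_mul (by simpa [Real.norm_eq_abs] using norm_le_pi_norm a j)
          (by simpa [Real.norm_eq_abs] using norm_le_pi_norm b j) (abs_nonneg _) (norm_nonneg _)
    _ = d * (‖a‖ * ‖b‖) := by simp [Finset.sum_const, nsmul_eq_mul]

lemma dot_mulVec_pair {d e : ℕ} (M : Matrix (Fin d) (Fin e) ℝ) (N : Matrix (Fin e) (Fin d) ℝ)
    (cc : ℝ) (hMN : ∀ j l, M j l + N l j = cc) (u : Fin d → ℝ) (w : Fin e → ℝ)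
    (hu : ∑ j, u j = 1) (hw : ∑ l, w l = 1) :
    dot (M.mulVec w) u + dot (N.mulVec u) w = cc := by
  unfold dot Matrix.mulVec dotProduct
  have h1 : ∑ j, (∑ l, M j l * w l) * u j = ∑ j, ∑ l, M j l * (u j * w l) := by
    refine Finset.sum_congr rfl fun j _ => ?_
    rw [Finset.sum_mul]; exact Finset.sum_congr rfl fun l _ => by ring
  have h2 : ∑ l, (∑ j, N l j * u j) * w l = ∑ j, ∑ l, N l j * (u j * w l) := by
    rw [Finset.sum_comm]
    refine Finset.sum_congr rfl fun j _ => ?_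
    rw [Finset.sum_mul]
    exact Finset.sum_congr rfl fun l _ => by ring
  rw [h1, h2, ← Finset.sum_add_distrib]
  have h3 : ∀ j : Fin d, (∑ l, M j l * (u j * w l)) + ∑ l, N l j * (u j * w l)
      = ∑ l, cc * (u j * w l) := by
    intro j
    rw [← Finset.sum_add_distrib]
    exact Finset.sum_congr rfl fun l _ => by rw [← add_mul, hMN]
  calc (∑ j, ((∑ l, M j l * (u j * w l)) + ∑ l, N l j * (u j * w l)))
      = ∑ j, ∑ l, cc * (u j * w l) := Finset.sum_congr rfl fun j _ => h3 j
    _ = cc * ((∑ j, u j) * (∑ l, w l)) := by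
        rw [Finset.sum_mul, Finset.mul_sum]
        refine Finset.sum_congr rfl fun j _ => ?_
        simp [Finset.mul_sum]
    _ = cc := by rw [hu, hw, one_mul, mul_one]

lemma dot_sum_left {d : ℕ} {ι : Type*} (s : Finset ι) (g : ι → Fin d → ℝ) (v : Fin d → ℝ) :
    dot (∑ k ∈ s, g k) v = ∑ k ∈ s, dot (g k) v := by
  unfold dot
  simp only [Finset.sum_apply, Finset.sum_mul]
  exact Finset.sum_comm

lemma ne_coords {d : ℕ} (p xs : Fin d → ℝ) (hxs : xs ∈ simplex d) (hpos : ∀ j, 0 < xs j)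
    (hne : ∀ y ∈ simplex d, dot y p ≤ dot xs p) : ∀ j, p j = dot xs p := by
  intro j
  have hle : ∀ l, p l ≤ dot xs p := by
    intro l
    have hsl : (Pi.single l 1 : Fin d → ℝ) ∈ simplex d := by
      constructor
      · intro j'
        by_cases hj : j' = l <;> simp [Pi.single_apply, hj]
      · simp [Pi.single_apply]
    have := hne _ hsl
    simpa [dot, Pi.single_apply, ite_mul] using this
  have hz : ∑ l, xs l * (dot xs p - p l) = 0 := by
    simp only [mul_sub]
    rw [Finset.sum_sub_distrib, ← Finset.sum_mul, hxs.2, one_mul]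
    have : ∑ l, xs l * p l = dot xs p := rfl
    rw [this, sub_self]
  have hterm : xs j * (dot xs p - p j) = 0 := by
    have := (Finset.sum_eq_zero_iff_of_nonneg (fun l _ =>
      mul_nonneg (hxs.1 l) (sub_nonneg.2 (hle l)))).1 hz j (Finset.mem_univ j)
    exact this
  have := mul_eq_zero.1 hterm
  rcases this with h1 | h2
  · exact absurd h1 (ne_of_gt (hpos j))
  · linarith [sub_eq_zero.1 h2]


lemma payoff_identity {m : ℕ} {n : Fin m → ℕ}
    (A : (i k : Fin m) → Matrix (Fin (n i)) (Fin (n k)) ℝ)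
    (c : Fin m → Fin m → ℝ)
    (hconst : ∀ i k, i ≠ k → ∀ (j : Fin (n i)) (l : Fin (n k)),
      A i k j l + A k i l j = c i k)
    (xstar : (i : Fin m) → Fin (n i) → ℝ) (hxs : ∀ i, xstar i ∈ simplex (n i))
    (hfull : ∀ i j, 0 < xstar i j)
    (hNE : ∀ i, ∀ y ∈ simplex (n i),
      dot y (payoff A xstar i) ≤ dot (xstar i) (payoff A xstar i))
    (y : (i : Fin m) → Fin (n i) → ℝ) (hy : ∀ i, y i ∈ simplex (n i)) :
    ∑ i, dot (payoff A y i) (y i) = ∑ i, dot (payoff A y i) (xstar i) := by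
  classical
  set T : ((i : Fin m) → Fin (n i) → ℝ) → ((i : Fin m) → Fin (n i) → ℝ) → ℝ :=
    fun u w => ∑ i, ∑ k, if k ≠ i then dot ((A i k).mulVec (w k)) (u i) else 0 with hT
  have hTdot : ∀ u w, ∑ i, dot (payoff A w i) (u i) = T u w := by
    intro u w
    refine Finset.sum_congr rfl fun i _ => ?_
    unfold payoff
    rw [dot_sum_left, ← Finset.filter_ne', Finset.sum_filter]
  set C : ℝ := ∑ i, ∑ k, if k ≠ i then c i k else 0 with hC
  have hpair : ∀ u w, (∀ i, u i ∈ simplex (n i)) → (∀ i, w i ∈ simplex (n i)) →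
      T u w + T w u = C := by
    intro u w hu hw
    have hswap : T w u =
        ∑ i, ∑ k, if i ≠ k then dot ((A k i).mulVec (u i)) (w k) else 0 :=
      Finset.sum_comm
    rw [hswap, hT]
    simp only [← Finset.sum_add_distrib]
    refine Finset.sum_congr rfl fun i _ => Finset.sum_congr rfl fun k' _ => ?_
    by_cases hk : k' = i
    · subst hk; simp
    · have hk' : k' ≠ i := hk
      have hik : i ≠ k' := Ne.symm hk
      rw [if_pos hk', if_pos hik, if_pos hk']
      exact dot_mulVec_pair (A i k') (A k' i) (c i k') (hconst i k' hik)
        (u i) (w k') (hu i).2 (hw k').2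
  have hCy := hpair y y hy hy
  have hCs := hpair xstar xstar hxs hxs
  have hmix := hpair xstar y hxs hy
  have hvy : T y xstar = T xstar xstar := by
    rw [← hTdot y xstar, ← hTdot xstar xstar]
    refine Finset.sum_congr rfl fun i _ => ?_
    have hc := ne_coords (payoff A xstar i) (xstar i) (hxs i) (hfull i) (hNE i)
    calc dot (payoff A xstar i) (y i)
        = ∑ j, dot (xstar i) (payoff A xstar i) * y i j :=
          Finset.sum_congr rfl fun j _ => by rw [show payoff A xstar i j * y i j =
            dot (xstar i) (payoff A xstar i) * y i j from by rw [hc j]]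
      _ = dot (xstar i) (payoff A xstar i) := by rw [← Finset.mul_sum, (hy i).2, mul_one]
      _ = dot (payoff A xstar i) (xstar i) := dot_comm _ _
  rw [hTdot y y, hTdot xstar y]
  linarith

lemma dot_sum_right {d : ℕ} {ι : Type*} (s : Finset ι) (v : Fin d → ℝ) (g : ι → Fin d → ℝ) :
    dot v (∑ k ∈ s, g k) = ∑ k ∈ s, dot v (g k) := by
  rw [dot_comm, dot_sum_left]
  exact Finset.sum_congr rfl fun k _ => dot_comm _ _

lemma dot_smul_right {d : ℕ} (a : ℝ) (v w : Fin d → ℝ) : dot v (a • w) = a * dot v w := by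
  unfold dot
  rw [Finset.mul_sum]
  exact Finset.sum_congr rfl fun j _ => by simp [Pi.smul_apply]; ring

lemma dot_zero_left {d : ℕ} (v : Fin d → ℝ) : dot (0 : Fin d → ℝ) v = 0 := by
  simp [dot]

lemma conj_sandwich {d : ℕ} (h : (Fin d → ℝ) → ℝ) (f : (Fin d → ℝ) → (Fin d → ℝ))
    (hf : ∀ q, f q ∈ simplex d ∧ ∀ y ∈ simplex d, dot q y - h y ≤ dot q (f q) - h (f q))
    (a b : Fin d → ℝ) :
    (dot a (f a) - h (f a)) - (dot b (f b) - h (f b)) ≤ dot (a - b) (f a) := by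
  have h1 := (hf b).2 (f a) (hf a).1
  rw [dot_sub_left]
  linarith

lemma conj_lipschitz {d : ℕ} (h : (Fin d → ℝ) → ℝ) (f : (Fin d → ℝ) → (Fin d → ℝ))
    (hf : ∀ q, f q ∈ simplex d ∧ ∀ y ∈ simplex d, dot q y - h y ≤ dot q (f q) - h (f q)) :
    LipschitzWith 1 (fun v => dot v (f v) - h (f v)) := by
  refine LipschitzWith.of_dist_le_mul fun a b => ?_
  rw [dist_eq_norm, dist_eq_norm, Real.norm_eq_abs, NNReal.coe_one, one_mul]
  have h1 := conj_sandwich h f hf a b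
  have h2 := conj_sandwich h f hf b a
  have h3 : dot (a - b) (f a) ≤ ‖a - b‖ :=
    le_trans (le_abs_self _) (abs_dot_le_of_simplex _ _ (hf a).1)
  have h4 : dot (b - a) (f b) ≤ ‖b - a‖ :=
    le_trans (le_abs_self _) (abs_dot_le_of_simplex _ _ (hf b).1)
  have he : ‖b - a‖ = ‖a - b‖ := norm_sub_rev _ _
  rw [abs_le]
  constructor <;> linarith


theorem constant_of_motion_for_lossless_game_dynamic
    (m : ℕ) (n : Fin m → ℕ)
    (A : (i k : Fin m) → Matrix (Fin (n i)) (Fin (n k)) ℝ)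
    (c : Fin m → Fin m → ℝ) (hcsym : ∀ i k, c i k = c k i)
    (hconst : ∀ i k, i ≠ k → ∀ (j : Fin (n i)) (l : Fin (n k)),
      A i k j l + A k i l j = c i k)
    (xstar : (i : Fin m) → Fin (n i) → ℝ)
    (hxs : ∀ i, xstar i ∈ simplex (n i))
    (hfull : ∀ i j, 0 < xstar i j)
    (hNE : ∀ i, ∀ y ∈ simplex (n i),
      dot y (payoff A xstar i) ≤ dot (xstar i) (payoff A xstar i))
    (k : Fin m → ℕ)
    (h : (i : Fin m) → Fin (k i) → (Fin (n i) → ℝ) → ℝ)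
    (hconv : ∀ i ℓ, StrictConvexOn ℝ (simplex (n i)) (h i ℓ))
    (hcont : ∀ i ℓ, ContinuousOn (h i ℓ) (simplex (n i)))
    (α : (i : Fin m) → Fin (k i) → ℝ)
    (hα : ∀ i ℓ, 0 ≤ α i ℓ) (hα1 : ∀ i, ∑ ℓ, α i ℓ = 1)
    (f : (i : Fin m) → Fin (k i) → (Fin (n i) → ℝ) → (Fin (n i) → ℝ))
    (hf : ∀ i ℓ q, f i ℓ q ∈ simplex (n i) ∧
      ∀ y ∈ simplex (n i), dot q y - h i ℓ y ≤ dot q (f i ℓ q) - h i ℓ (f i ℓ q))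
    (q : (i : Fin m) → ℝ → Fin (n i) → ℝ)
    (x : (i : Fin m) → ℝ → Fin (n i) → ℝ)
    (hqc : ∀ i, Continuous (q i)) (hxc : ∀ i, Continuous (x i))
    (hq : ∀ (i : Fin m) (t : ℝ), 0 ≤ t →
      q i t = q i 0 + ∫ τ in (0:ℝ)..t, payoff A (fun k' => x k' τ) i)
    (hx : ∀ (i : Fin m) (t : ℝ), 0 ≤ t →
      x i t = ∑ ℓ, α i ℓ • f i ℓ (q i t)) :
    ∀ t : ℝ, 0 ≤ t →
      (∑ i, ∑ ℓ, α i ℓ *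
        ((dot (q i t) (f i ℓ (q i t)) - h i ℓ (f i ℓ (q i t)))
          - dot (q i t) (xstar i) + h i ℓ (xstar i))) =
      (∑ i, ∑ ℓ, α i ℓ *
        ((dot (q i 0) (f i ℓ (q i 0)) - h i ℓ (f i ℓ (q i 0)))
          - dot (q i 0) (xstar i) + h i ℓ (xstar i))) := by
  classical
  intro t ht
  set H : ℝ → ℝ := fun s => ∑ i, ∑ ℓ, α i ℓ *
      ((dot (q i s) (f i ℓ (q i s)) - h i ℓ (f i ℓ (q i s)))
        - dot (q i s) (xstar i) + h i ℓ (xstar i)) with hHdef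
  show H t = H 0
  -- components of x are in the simplex
  have hxsimp : ∀ (i : Fin m) (s : ℝ), 0 ≤ s → x i s ∈ simplex (n i) := by
    intro i s hs
    rw [hx i s hs]
    constructor
    · intro j
      have hj : (∑ ℓ, α i ℓ • f i ℓ (q i s)) j = ∑ ℓ, α i ℓ * f i ℓ (q i s) j := by
        simp [Finset.sum_apply]
      rw [hj]
      exact Finset.sum_nonneg fun ℓ _ => mul_nonneg (hα i ℓ) ((hf i ℓ _).1.1 j)
    · simp only [Finset.sum_apply, Pi.smul_apply, smul_eq_mul]
      rw [Finset.sum_comm]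
      calc ∑ ℓ, ∑ j, α i ℓ * f i ℓ (q i s) j = ∑ ℓ, α i ℓ := by
            refine Finset.sum_congr rfl fun ℓ _ => ?_
            rw [← Finset.mul_sum, (hf i ℓ _).1.2, mul_one]
        _ = 1 := hα1 i
  -- the instantaneous payoff
  set P : (i : Fin m) → ℝ → Fin (n i) → ℝ :=
    fun i τ => payoff A (fun k' => x k' τ) i with hPdef
  have hPc : ∀ i, Continuous (P i) := by
    intro i
    have : Continuous fun τ => ∑ k' ∈ Finset.univ.erase i, (A i k').mulVec (x k' τ) := by
      refine continuous_finset_sum _ fun k' _ => ?_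
      exact Continuous.matrix_mulVec continuous_const (hxc k')
    exact this
  -- derivative of q within Ici s
  have hQ : ∀ (i : Fin m) (s : ℝ), 0 ≤ s →
      HasDerivWithinAt (q i) (P i s) (Set.Ici s) s := by
    intro i s hs
    have hd : HasDerivAt (fun u => ∫ τ in (0:ℝ)..u, P i τ) (P i s) s :=
      intervalIntegral.integral_hasDerivAt_right ((hPc i).intervalIntegrable _ _)
        ((hPc i).stronglyMeasurableAtFilter _ _) (hPc i).continuousAt
    have hd' : HasDerivWithinAt (fun u => q i 0 + ∫ τ in (0:ℝ)..u, P i τ) (P i s)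
        (Set.Ici s) s := (hd.const_add (q i 0)).hasDerivWithinAt
    exact hd'.congr (fun u hu => hq i u (le_trans hs hu)) (hq i s hs)
  -- sandwich inequalities
  have hHdiff : ∀ s u : ℝ, H u - H s = ∑ i, ∑ ℓ, α i ℓ *
      ((dot (q i u) (f i ℓ (q i u)) - h i ℓ (f i ℓ (q i u)))
        - (dot (q i s) (f i ℓ (q i s)) - h i ℓ (f i ℓ (q i s)))
        - dot (q i u - q i s) (xstar i)) := by
    intro s u
    rw [hHdef]
    rw [← Finset.sum_sub_distrib]
    refine Finset.sum_congr rfl fun i _ => ?_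
    rw [← Finset.sum_sub_distrib]
    refine Finset.sum_congr rfl fun ℓ _ => ?_
    rw [dot_sub_left]; ring
  have keyUp : ∀ s u : ℝ, 0 ≤ s → 0 ≤ u →
      H u - H s ≤ ∑ i, dot (q i u - q i s) (x i u - xstar i) := by
    intro s u hs hu
    rw [hHdiff s u]
    refine Finset.sum_le_sum fun i _ => ?_
    have hterm : ∀ ℓ : Fin (k i), α i ℓ *
        ((dot (q i u) (f i ℓ (q i u)) - h i ℓ (f i ℓ (q i u)))
          - (dot (q i s) (f i ℓ (q i s)) - h i ℓ (f i ℓ (q i s)))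
          - dot (q i u - q i s) (xstar i))
        ≤ α i ℓ * (dot (q i u - q i s) (f i ℓ (q i u)) - dot (q i u - q i s) (xstar i)) := by
      intro ℓ
      refine mul_le_mul_of_nonneg_left ?_ (hα i ℓ)
      have := conj_sandwich (h i ℓ) (f i ℓ) (hf i ℓ) (q i u) (q i s)
      linarith
    calc (∑ ℓ, α i ℓ *
        ((dot (q i u) (f i ℓ (q i u)) - h i ℓ (f i ℓ (q i u)))
          - (dot (q i s) (f i ℓ (q i s)) - h i ℓ (f i ℓ (q i s)))
          - dot (q i u - q i s) (xstar i)))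
        ≤ ∑ ℓ, α i ℓ * (dot (q i u - q i s) (f i ℓ (q i u))
            - dot (q i u - q i s) (xstar i)) := Finset.sum_le_sum fun ℓ _ => hterm ℓ
      _ = dot (q i u - q i s) (x i u - xstar i) := by
          have e1 : (∑ ℓ, α i ℓ * (dot (q i u - q i s) (f i ℓ (q i u))
              - dot (q i u - q i s) (xstar i)))
              = (∑ ℓ, α i ℓ * dot (q i u - q i s) (f i ℓ (q i u)))
                - dot (q i u - q i s) (xstar i) := by
            simp only [mul_sub]
            rw [Finset.sum_sub_distrib, ← Finset.sum_mul, hα1, one_mul]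
          have e2 : dot (q i u - q i s) (x i u)
              = ∑ ℓ, α i ℓ * dot (q i u - q i s) (f i ℓ (q i u)) := by
            rw [hx i u hu, dot_sum_right]
            exact Finset.sum_congr rfl fun ℓ _ => dot_smul_right _ _ _
          rw [dot_sub_right, e1, e2]
  have keyLow : ∀ s u : ℝ, 0 ≤ s → 0 ≤ u →
      (∑ i, dot (q i u - q i s) (x i s - xstar i)) ≤ H u - H s := by
    intro s u hs hu
    rw [hHdiff s u]
    refine Finset.sum_le_sum fun i _ => ?_
    have hterm : ∀ ℓ : Fin (k i),
        α i ℓ * (dot (q i u - q i s) (f i ℓ (q i s)) - dot (q i u - q i s) (xstar i))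
        ≤ α i ℓ *
        ((dot (q i u) (f i ℓ (q i u)) - h i ℓ (f i ℓ (q i u)))
          - (dot (q i s) (f i ℓ (q i s)) - h i ℓ (f i ℓ (q i s)))
          - dot (q i u - q i s) (xstar i)) := by
      intro ℓ
      refine mul_le_mul_of_nonneg_left ?_ (hα i ℓ)
      have hcs := conj_sandwich (h i ℓ) (f i ℓ) (hf i ℓ) (q i s) (q i u)
      have hneg : dot (q i s - q i u) (f i ℓ (q i s))
          = - dot (q i u - q i s) (f i ℓ (q i s)) := by
        rw [dot_sub_left, dot_sub_left]; ring
      rw [hneg] at hcs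
      linarith
    calc dot (q i u - q i s) (x i s - xstar i)
        = ∑ ℓ, α i ℓ * (dot (q i u - q i s) (f i ℓ (q i s))
            - dot (q i u - q i s) (xstar i)) := by
          have e1 : (∑ ℓ, α i ℓ * (dot (q i u - q i s) (f i ℓ (q i s))
              - dot (q i u - q i s) (xstar i)))
              = (∑ ℓ, α i ℓ * dot (q i u - q i s) (f i ℓ (q i s)))
                - dot (q i u - q i s) (xstar i) := by
            simp only [mul_sub]
            rw [Finset.sum_sub_distrib, ← Finset.sum_mul, hα1, one_mul]
          have e2 : dot (q i u - q i s) (x i s)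
              = ∑ ℓ, α i ℓ * dot (q i u - q i s) (f i ℓ (q i s)) := by
            rw [hx i s hs, dot_sum_right]
            exact Finset.sum_congr rfl fun ℓ _ => dot_smul_right _ _ _
          rw [dot_sub_right, e1, e2]
      _ ≤ _ := Finset.sum_le_sum fun ℓ _ => hterm ℓ
  -- H is continuous
  have hHc : Continuous H := by
    rw [hHdef]
    refine continuous_finset_sum _ fun i _ => continuous_finset_sum _ fun ℓ _ => ?_
    refine Continuous.mul continuous_const ?_
    refine Continuous.add (Continuous.sub ?_ ?_) continuous_const
    · exact ((conj_lipschitz (h i ℓ) (f i ℓ) (hf i ℓ)).continuous).comp (hqc i)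
    · exact continuous_finset_sum _ fun j _ =>
        ((continuous_apply j).comp (hqc i)).mul continuous_const
  -- derivative zero on the right
  have hderiv : ∀ s : ℝ, 0 ≤ s → HasDerivWithinAt H 0 (Set.Ici s) s := by
    intro s hs
    set Lf : ℝ → ℝ := fun u => ∑ i, dot (q i u - q i s) (x i s - xstar i) with hLf
    set Ef : ℝ → ℝ := fun u => ∑ i, dot (q i u - q i s) (x i u - x i s) with hEf
    have hcoord : ∀ (i : Fin m) (j : Fin (n i)),
        HasDerivWithinAt (fun u => q i u j) (P i s j) (Set.Ici s) s := by
      intro i j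
      exact ((ContinuousLinearMap.proj j :
        ((Fin (n i)) → ℝ) →L[ℝ] ℝ).hasFDerivAt).comp_hasDerivWithinAt s (hQ i s hs)
    have hLd0 : HasDerivWithinAt Lf (∑ i, dot (P i s) (x i s - xstar i))
        (Set.Ici s) s := by
      rw [hLf]
      exact HasDerivWithinAt.fun_sum fun i _ => HasDerivWithinAt.fun_sum fun j _ =>
        ((hcoord i j).sub_const (q i s j)).mul_const (x i s j - xstar i j)
    have hLzero : ∑ i, dot (P i s) (x i s - xstar i) = 0 := by
      have hpi := payoff_identity A c hconst xstar hxs hfull hNE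
        (fun i => x i s) (fun i => hxsimp i s hs)
      have hsplit : ∑ i, dot (P i s) (x i s - xstar i)
          = (∑ i, dot (P i s) (x i s)) - ∑ i, dot (P i s) (xstar i) := by
        rw [← Finset.sum_sub_distrib]
        exact Finset.sum_congr rfl fun i _ => dot_sub_right _ _ _
      rw [hsplit]
      exact sub_eq_zero_of_eq hpi
    have hL : HasDerivWithinAt Lf 0 (Set.Ici s) s := hLzero ▸ hLd0
    have hLo : (fun u => Lf u) =o[nhdsWithin s (Set.Ici s)] (fun u => u - s) := by
      have hio := hasDerivWithinAt_iff_isLittleO.1 hL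
      have hLs : Lf s = 0 := by
        rw [hLf]
        exact Finset.sum_eq_zero fun i _ => by rw [sub_self]; exact dot_zero_left _
      simpa [hLs] using hio
    have hEo : (fun u => Ef u) =o[nhdsWithin s (Set.Ici s)] (fun u => u - s) := by
      rw [hEf]
      refine Asymptotics.IsLittleO.fun_sum fun i _ => ?_
      have hqO : (fun u => q i u - q i s) =O[nhdsWithin s (Set.Ici s)]
          (fun u => u - s) := ((hQ i s hs).hasFDerivWithinAt).isBigO_sub
      have hxo : (fun u => x i u - x i s) =o[nhdsWithin s (Set.Ici s)]
          (fun _ => (1:ℝ)) := by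
        rw [Asymptotics.isLittleO_one_iff]
        have htd : Filter.Tendsto (fun u => x i u - x i s) (nhds s)
            (nhds (x i s - x i s)) := ((hxc i).tendsto s).sub tendsto_const_nhds
        simpa using htd.mono_left nhdsWithin_le_nhds
      have hmul : (fun u => ‖q i u - q i s‖ * ‖x i u - x i s‖)
          =o[nhdsWithin s (Set.Ici s)] (fun u => (u - s) * 1) :=
        (hqO.norm_left).mul_isLittleO (hxo.norm_left)
      have hbound : (fun u => dot (q i u - q i s) (x i u - x i s))
          =O[nhdsWithin s (Set.Ici s)]
          (fun u => ‖q i u - q i s‖ * ‖x i u - x i s‖) := by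
        rw [Asymptotics.isBigO_iff]
        refine ⟨n i, Filter.Eventually.of_forall fun u => ?_⟩
        rw [Real.norm_eq_abs, Real.norm_eq_abs]
        calc |dot (q i u - q i s) (x i u - x i s)|
            ≤ (n i : ℝ) * (‖q i u - q i s‖ * ‖x i u - x i s‖) := abs_dot_le _ _
          _ ≤ (n i : ℝ) * |‖q i u - q i s‖ * ‖x i u - x i s‖| :=
              mul_le_mul_of_nonneg_left (le_abs_self _) (Nat.cast_nonneg _)
      have := hbound.trans_isLittleO hmul
      simpa using this
    have hOb : (fun u => H u - H s) =O[nhdsWithin s (Set.Ici s)]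
        (fun u => ‖Lf u‖ + ‖Ef u‖) := by
      rw [Asymptotics.isBigO_iff]
      refine ⟨1, ?_⟩
      filter_upwards [self_mem_nhdsWithin] with u hu
      have hu0 : (0:ℝ) ≤ u := le_trans hs hu
      have k1 := keyUp s u hs hu0
      have k2 := keyLow s u hs hu0
      have hsplit : ∑ i, dot (q i u - q i s) (x i u - xstar i) = Lf u + Ef u := by
        rw [hLf, hEf]
        simp only
        rw [← Finset.sum_add_distrib]
        refine Finset.sum_congr rfl fun i _ => ?_
        rw [dot_sub_right, dot_sub_right, dot_sub_right]; ring
      rw [hsplit] at k1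
      rw [one_mul, Real.norm_eq_abs, Real.norm_eq_abs, Real.norm_eq_abs,
        Real.norm_eq_abs, abs_of_nonneg (by positivity : (0:ℝ) ≤ |Lf u| + |Ef u|)]
      rw [abs_le]
      constructor
      · have := neg_abs_le (Lf u)
        have := abs_nonneg (Ef u)
        linarith
      · have := le_abs_self (Lf u)
        have := le_abs_self (Ef u)
        linarith
    have hsum : (fun u => ‖Lf u‖ + ‖Ef u‖) =o[nhdsWithin s (Set.Ici s)]
        (fun u => u - s) := (hLo.norm_left).add (hEo.norm_left)
    rw [hasDerivWithinAt_iff_isLittleO]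
    simpa using hOb.trans_isLittleO hsum
  have hcst := constant_of_has_deriv_right_zero (f := H) (a := 0) (b := t)
      (hHc.continuousOn) (fun s hsm => hderiv s hsm.1)
  exact hcst t ⟨ht, le_refl t⟩
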